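/- Let f : ℝ^d → ℝ be three times continuously differentiable, convex, and self-concordant. Then for all x, y ∈ ℝ^d, f(y) ≥ f(x) + ⟨∇f(x), y − x⟩ + ω(√(D²f(x)[y − x, y − x])), where ω(t) := t − ln(1 + t). -/

import Mathlib

open scoped RealInnerProductSpace

open Real Set Filter Topology

section Aux

/-- Comparison bound for `(√u)⁻¹` on a convex set where `u` is positive. -/
private lemma sc_inv_sqrt_bound (u w : ℝ → ℝ)
    (hu : ∀ t, HasDerivAt u (w t) t)
    (hw : ∀ t, |w t| ≤ 2 * u t ^ ((3:ℝ)/2))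
    (D : Set ℝ) (hD : Convex ℝ D) (hD0 : (0:ℝ) ∈ D)
    (hpos : ∀ s ∈ D, 0 < u s) :
    ∀ s ∈ D, 0 ≤ s → (Real.sqrt (u s))⁻¹ ≤ (Real.sqrt (u 0))⁻¹ + s := by
  have hucont : Continuous u := by
    rw [continuous_iff_continuousAt]; exact fun t => (hu t).continuousAt
  set F : ℝ → ℝ := fun s => s + (Real.sqrt (u 0))⁻¹ - (Real.sqrt (u s))⁻¹ with hF
  have hder : ∀ p ∈ D, HasDerivAt F
      (1 - -(w p / (2 * Real.sqrt (u p))) / (Real.sqrt (u p)) ^ 2) p := by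
    intro p hp
    have hup : 0 < u p := hpos p hp
    have hsq : HasDerivAt (fun s => Real.sqrt (u s)) (w p / (2 * Real.sqrt (u p))) p :=
      (hu p).sqrt (ne_of_gt hup)
    have hinv := hsq.inv (ne_of_gt (Real.sqrt_pos.mpr hup))
    exact ((hasDerivAt_id p).add_const _).sub hinv
  have hnn : ∀ p ∈ D, 0 ≤ 1 - -(w p / (2 * Real.sqrt (u p))) / (Real.sqrt (u p)) ^ 2 := by
    intro p hp
    have hup : 0 < u p := hpos p hp
    have hs : 0 < Real.sqrt (u p) := Real.sqrt_pos.mpr hup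
    have hs2 : Real.sqrt (u p) ^ 2 = u p := Real.sq_sqrt hup.le
    have h32 : u p ^ ((3:ℝ)/2) = u p * Real.sqrt (u p) := by
      rw [show (3:ℝ)/2 = 1 + 1/2 by norm_num, Real.rpow_add hup, Real.rpow_one,
        Real.sqrt_eq_rpow]
    have hwle : -(2 * (u p * Real.sqrt (u p))) ≤ w p := by
      have := (abs_le.mp (hw p)).1
      rw [h32] at this; linarith
    have key : -(w p / (2 * Real.sqrt (u p))) / (Real.sqrt (u p)) ^ 2 ≤ 1 := by
      rw [div_le_one (by positivity)]
      have heq : -(w p / (2 * Real.sqrt (u p))) = (-(w p)) / (2 * Real.sqrt (u p)) := by ring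
      rw [heq, div_le_iff₀ (by positivity)]
      nlinarith [hs, hs2]
    linarith
  have hFmono : MonotoneOn F D := by
    apply monotoneOn_of_deriv_nonneg hD
    · exact fun p hp => ((hder p hp).continuousAt.continuousWithinAt)
    · exact fun p hp => ((hder p (interior_subset hp)).differentiableAt.differentiableWithinAt)
    · intro p hp
      rw [(hder p (interior_subset hp)).deriv]
      exact hnn p (interior_subset hp)
  intro s hs hs0
  have := hFmono hD0 hs hs0
  simp only [hF] at this
  linarith

end Aux

private lemma sc_core (u w b φ : ℝ → ℝ)
    (hu : ∀ t, HasDerivAt u (w t) t)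
    (hb : ∀ t, HasDerivAt b (u t) t)
    (hφ : ∀ t, HasDerivAt φ (b t) t)
    (hu0 : ∀ t, 0 ≤ u t)
    (hw : ∀ t, |w t| ≤ 2 * u t ^ ((3:ℝ)/2)) :
    φ 0 + b 0 + (Real.sqrt (u 0) - Real.log (1 + Real.sqrt (u 0))) ≤ φ 1 := by
  set r := Real.sqrt (u 0) with hrdef
  have hr0 : 0 ≤ r := Real.sqrt_nonneg _
  have hu00 : u 0 = r ^ 2 := (Real.sq_sqrt (hu0 0)).symm
  have hucont : Continuous u := by
    rw [continuous_iff_continuousAt]; exact fun t => (hu t).continuousAt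
  -- Step A : pointwise lower bound on u
  have key : ∀ t ∈ Icc (0:ℝ) 1, r ^ 2 / (1 + r * t) ^ 2 ≤ u t := by
    rcases eq_or_lt_of_le hr0 with h0 | hrpos
    · intro t ht
      rw [← h0]
      simpa using hu0 t
    · have hu0pos : 0 < u 0 := by rw [hu00]; positivity
      have pos : ∀ t ∈ Icc (0:ℝ) 1, 0 < u t := by
        by_contra hcon
        push_neg at hcon
        obtain ⟨t₁, ht₁, ht₁'⟩ := hcon
        set B := Icc (0:ℝ) 1 ∩ u ⁻¹' {0} with hB
        have hBne : B.Nonempty := ⟨t₁, ht₁, le_antisymm ht₁' (hu0 t₁)⟩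
        have hBclosed : IsClosed B :=
          isClosed_Icc.inter (isClosed_singleton.preimage hucont)
        have hBbdd : BddBelow B := ⟨0, fun t ht => ht.1.1⟩
        set t₀ := sInf B with ht₀def
        have ht₀B : t₀ ∈ B := hBclosed.csInf_mem hBne hBbdd
        have ht₀0 : u t₀ = 0 := ht₀B.2
        have ht₀pos : 0 < t₀ := by
          rcases lt_or_eq_of_le ht₀B.1.1 with h | h
          · exact h
          · exfalso; rw [← h] at ht₀0; rw [ht₀0] at hu0pos; exact lt_irrefl 0 hu0pos
        have hIco : ∀ s ∈ Ico (0:ℝ) t₀, 0 < u s := by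
          intro s hs
          have hne : u s ≠ 0 := by
            intro h
            have : t₀ ≤ s := csInf_le hBbdd ⟨⟨hs.1, hs.2.le.trans ht₀B.1.2⟩, h⟩
            exact absurd this (not_le.mpr hs.2)
          exact (hu0 s).lt_of_ne (Ne.symm hne)
        have hbound := sc_inv_sqrt_bound u w hu hw (Ico 0 t₀) (convex_Ico _ _)
          ⟨le_rfl, ht₀pos⟩ hIco
        have hε : ∀ s ∈ Ico (0:ℝ) t₀, (r / (1 + r)) ^ 2 ≤ u s := by
          intro s hs
          have hsle := hbound s hs hs.1
          have hus : 0 < u s := hIco s hs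
          have hss : 0 < Real.sqrt (u s) := Real.sqrt_pos.mpr hus
          have h1 : (Real.sqrt (u s))⁻¹ ≤ (1 + r) / r := by
            rw [hu00, Real.sqrt_sq hr0] at hsle
            have : s ≤ 1 := hs.2.le.trans ht₀B.1.2
            rw [div_eq_mul_inv, add_mul, one_mul]
            calc (Real.sqrt (u s))⁻¹ ≤ r⁻¹ + s := hsle
              _ ≤ r⁻¹ + 1 := by linarith
              _ = r⁻¹ + r * r⁻¹ := by rw [mul_inv_cancel₀ (ne_of_gt hrpos)]
              _ = r⁻¹ + r * r⁻¹ := rfl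
          have h2 : r / (1 + r) ≤ Real.sqrt (u s) := by
            have h1r : 0 < (1 + r) / r := by positivity
            have := inv_anti₀ (by positivity) h1
            rwa [inv_inv, inv_div] at this
          calc (r / (1 + r)) ^ 2 ≤ (Real.sqrt (u s)) ^ 2 := by
                apply pow_le_pow_left₀ (by positivity) h2
            _ = u s := Real.sq_sqrt hus.le
        have hlim : (r / (1 + r)) ^ 2 ≤ u t₀ := by
          have hnb : (𝓝[<] t₀).NeBot := nhdsLT_neBot t₀
          refine ge_of_tendsto (hucont.continuousAt.continuousWithinAt
            (s := Iio t₀)) ?_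
          filter_upwards [Ioo_mem_nhdsLT ht₀pos] with s hs
          exact hε s ⟨hs.1.le, hs.2⟩
        rw [ht₀0] at hlim
        nlinarith [hlim, div_pos hrpos (by linarith : (0:ℝ) < 1 + r)]
      -- now the quantitative bound
      intro t ht
      have hbound := sc_inv_sqrt_bound u w hu hw (Icc 0 1) (convex_Icc _ _)
        ⟨le_rfl, zero_le_one⟩ pos t ht ht.1
      have hut : 0 < u t := pos t ht
      have hst : 0 < Real.sqrt (u t) := Real.sqrt_pos.mpr hut
      have h1rt : 0 < 1 + r * t := by nlinarith [ht.1, ht.2]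
      have h1 : (Real.sqrt (u t))⁻¹ ≤ (1 + r * t) / r := by
        rw [hu00, Real.sqrt_sq hr0] at hbound
        have heq : (1 + r * t) / r = r⁻¹ + t := by
          rw [add_div, mul_comm r t, mul_div_assoc, div_self (ne_of_gt hrpos), mul_one, one_div]
        rw [heq]
        linarith [hbound]
      have h2 : r / (1 + r * t) ≤ Real.sqrt (u t) := by
        have := inv_anti₀ (by positivity) h1
        rwa [inv_inv, inv_div] at this
      calc r ^ 2 / (1 + r * t) ^ 2 = (r / (1 + r * t)) ^ 2 := by rw [div_pow]
        _ ≤ (Real.sqrt (u t)) ^ 2 := pow_le_pow_left₀ (by positivity) h2 2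
        _ = u t := Real.sq_sqrt hut.le
  -- Step B : integrate twice
  have h1rt : ∀ t ∈ Icc (0:ℝ) 1, 0 < 1 + r * t := by
    intro t ht; nlinarith [ht.1, ht.2]
  have hden : ∀ t : ℝ, HasDerivAt (fun s => 1 + r * s) r t := by
    intro t
    simpa using ((hasDerivAt_id t).const_mul r).const_add 1
  set E : ℝ → ℝ := fun t => b t - b 0 - (r - r / (1 + r * t)) with hE
  have hE' : ∀ t ∈ Icc (0:ℝ) 1, HasDerivAt E (u t - r ^ 2 / (1 + r * t) ^ 2) t := by
    intro t ht
    have hdiv : HasDerivAt (fun s => r / (1 + r * s))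
        ((0 * (1 + r * t) - r * r) / (1 + r * t) ^ 2) t :=
      (hasDerivAt_const t r).div (hden t) (ne_of_gt (h1rt t ht))
    have := ((hb t).sub_const (b 0)).sub ((hasDerivAt_const t r).sub hdiv)
    refine this.congr_deriv ?_
    ring
  have hEmono : MonotoneOn E (Icc (0:ℝ) 1) := by
    apply monotoneOn_of_deriv_nonneg (convex_Icc 0 1)
    · exact fun p hp => ((hE' p hp).continuousAt.continuousWithinAt)
    · intro p hp
      rw [interior_Icc] at hp
      exact ((hE' p (Ioo_subset_Icc_self hp)).differentiableAt.differentiableWithinAt)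
    · intro p hp
      rw [interior_Icc] at hp
      rw [(hE' p (Ioo_subset_Icc_self hp)).deriv]
      have := key p (Ioo_subset_Icc_self hp)
      linarith
  have hE0 : E 0 = 0 := by simp [hE]
  have hEpos : ∀ t ∈ Icc (0:ℝ) 1, 0 ≤ E t := by
    intro t ht
    have := hEmono ⟨le_rfl, zero_le_one⟩ ht ht.1
    rw [hE0] at this; exact this
  set G : ℝ → ℝ := fun t => φ t - φ 0 - t * b 0 - (r * t - Real.log (1 + r * t)) with hG
  have hG' : ∀ t ∈ Icc (0:ℝ) 1, HasDerivAt G (E t) t := by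
    intro t ht
    have hlog : HasDerivAt (fun s => Real.log (1 + r * s)) (r / (1 + r * t)) t :=
      (hden t).log (ne_of_gt (h1rt t ht))
    have := (((hφ t).sub_const (φ 0)).sub ((hasDerivAt_id t).mul_const (b 0))).sub
      (((hasDerivAt_id t).const_mul r).sub hlog)
    refine this.congr_deriv ?_
    simp only [hE]
    ring
  have hGmono : MonotoneOn G (Icc (0:ℝ) 1) := by
    apply monotoneOn_of_deriv_nonneg (convex_Icc 0 1)
    · exact fun p hp => ((hG' p hp).continuousAt.continuousWithinAt)
    · intro p hp
      rw [interior_Icc] at hp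
      exact ((hG' p (Ioo_subset_Icc_self hp)).differentiableAt.differentiableWithinAt)
    · intro p hp
      rw [interior_Icc] at hp
      rw [(hG' p (Ioo_subset_Icc_self hp)).deriv]
      exact hEpos p (Ioo_subset_Icc_self hp)
  have hfinal := hGmono ⟨le_rfl, zero_le_one⟩ ⟨zero_le_one, le_rfl⟩ zero_le_one
  simp only [hG, mul_zero, mul_one, zero_mul, add_zero, Real.log_one, one_mul] at hfinal
  linarith [hfinal]

/-- **Lemma 4, inequality (lemma_4_1) (Nesterov, Theorem 4.1.7).** If `f : ℝ^d → ℝ` is three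
times continuously differentiable, convex and self-concordant, then for all `x, y`,
`f(y) ≥ f(x) + ⟨∇f(x), y − x⟩ + ω(√(D²f(x)[y − x, y − x]))` where `ω(t) = t − ln(1 + t)`. -/
theorem self_concordant_lower_bound {d : ℕ}
    (f : EuclideanSpace ℝ (Fin d) → ℝ) (hf : ContDiff ℝ 3 f)
    (hconv : ConvexOn ℝ Set.univ f)
    (hself : ∀ x h, |iteratedFDeriv ℝ 3 f x ![h, h, h]| ≤
      2 * iteratedFDeriv ℝ 2 f x ![h, h] ^ ((3 : ℝ) / 2))
    (x y : EuclideanSpace ℝ (Fin d)) :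
    f y ≥ f x + ⟪gradient f x, y - x⟫ +
      (Real.sqrt (iteratedFDeriv ℝ 2 f x ![y - x, y - x]) -
        Real.log (1 + Real.sqrt (iteratedFDeriv ℝ 2 f x ![y - x, y - x]))) := by
  set h := y - x with hh
  set c : ℝ → EuclideanSpace ℝ (Fin d) := fun t => x + t • h with hc
  have hfdiff : Differentiable ℝ f := hf.differentiable (by norm_num)
  have hcder : ∀ t, HasDerivAt c h t := by
    intro t
    have h1 : HasDerivAt (fun t : ℝ => t • h) ((1:ℝ) • h) t := (hasDerivAt_id t).smul_const h
    simpa [hc] using h1.const_add x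
  set b : ℝ → ℝ := fun t => fderiv ℝ f (c t) h with hbdef
  set u : ℝ → ℝ := fun t => iteratedFDeriv ℝ 2 f (c t) ![h, h] with hudef
  set w : ℝ → ℝ := fun t => iteratedFDeriv ℝ 3 f (c t) ![h, h, h] with hwdef
  set φ : ℝ → ℝ := fun t => f (c t) with hφdef
  have hφ : ∀ t, HasDerivAt φ (b t) t := fun t =>
    (hfdiff (c t)).hasFDerivAt.comp_hasDerivAt t (hcder t)
  -- derivative of b is u
  have hF1 : ContDiff ℝ 2 (fderiv ℝ f) := hf.fderiv_right (by norm_num)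
  have hbd : ∀ t, HasDerivAt b (u t) t := by
    intro t
    have h1 : HasFDerivAt (fderiv ℝ f) (fderiv ℝ (fderiv ℝ f) (c t)) (c t) :=
      (hF1.differentiable (by norm_num) (c t)).hasFDerivAt
    have h2 : HasDerivAt (fun s => fderiv ℝ f (c s)) (fderiv ℝ (fderiv ℝ f) (c t) h) t :=
      h1.comp_hasDerivAt t (hcder t)
    have h3 := h2.clm_apply (hasDerivAt_const t h)
    simp only [map_zero, add_zero] at h3
    have heq : u t = fderiv ℝ (fderiv ℝ f) (c t) h h := by
      show iteratedFDeriv ℝ 2 f (c t) ![h, h] = _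
      rw [iteratedFDeriv_two_apply]
      simp
    rw [heq]
    exact h3
  -- derivative of u is w
  have hG2 : ContDiff ℝ 1 (iteratedFDeriv ℝ 2 f) := hf.iteratedFDeriv_right (by norm_num)
  have hud : ∀ t, HasDerivAt u (w t) t := by
    intro t
    have h1 : HasFDerivAt (iteratedFDeriv ℝ 2 f)
        (fderiv ℝ (iteratedFDeriv ℝ 2 f) (c t)) (c t) :=
      (hG2.differentiable (by norm_num) (c t)).hasFDerivAt
    have h2 := h1.comp_hasDerivAt t (hcder t)
    have h3 := (ContinuousMultilinearMap.apply ℝ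
      (fun _ : Fin 2 => EuclideanSpace ℝ (Fin d)) ℝ ![h, h]).hasFDerivAt.comp_hasDerivAt t h2
    have heq : w t = fderiv ℝ (iteratedFDeriv ℝ 2 f) (c t) h ![h, h] := by
      have h4 := iteratedFDeriv_succ_apply_left (𝕜 := ℝ) (f := f) (n := 2) (x := c t)
        ![h, h, h]
      simp only [Matrix.cons_val_zero, Matrix.tail_cons] at h4
      exact h4
    rw [heq]
    exact h3
  -- convexity along the line
  have hA : ConvexOn ℝ Set.univ φ := by
    have hφeq : φ = f ∘ (AffineMap.lineMap x (x + h) : ℝ →ᵃ[ℝ] _) := by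
      funext t
      show f (x + t • h) = f (AffineMap.lineMap x (x + h) t)
      rw [AffineMap.lineMap_apply]
      congr 1
      simp only [vsub_eq_sub, vadd_eq_add, add_sub_cancel_left]
      abel
    rw [hφeq]
    simpa using hconv.comp_affineMap (AffineMap.lineMap x (x + h) : ℝ →ᵃ[ℝ] _)
  have hmono : Monotone b := by
    have h1 : Monotone (deriv φ) :=
      monotoneOn_univ.mp (hA.monotoneOn_deriv (fun t _ => (hφ t).differentiableAt))
    intro s t hst
    rw [← (hφ s).deriv, ← (hφ t).deriv]
    exact h1 hst
  have hu0 : ∀ t, 0 ≤ u t := by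
    intro t
    have hslope := hasDerivAt_iff_tendsto_slope.mp (hbd t)
    refine ge_of_tendsto hslope ?_
    filter_upwards [self_mem_nhdsWithin] with s hs
    rw [slope_def_field]
    rcases lt_or_gt_of_ne (hs : s ≠ t) with h' | h'
    · exact div_nonneg_of_nonpos (by simpa [sub_nonpos] using hmono h'.le)
        (by linarith)
    · exact div_nonneg (by simpa [sub_nonneg] using hmono h'.le) (by linarith)
  have main := sc_core u w b φ hud hbd hφ hu0 (fun t => hself (c t) h)
  have hc0 : c 0 = x := by simp [hc]
  have hc1 : c 1 = y := by simp [hc, hh]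
  have e1 : φ 1 = f y := by show f (c 1) = f y; rw [hc1]
  have e0 : φ 0 = f x := by show f (c 0) = f x; rw [hc0]
  have eu : u 0 = iteratedFDeriv ℝ 2 f x ![h, h] := by
    show iteratedFDeriv ℝ 2 f (c 0) ![h, h] = _
    rw [hc0]
  have eb : b 0 = ⟪gradient f x, h⟫ := by
    show fderiv ℝ f (c 0) h = _
    rw [hc0]
    rw [show gradient f x = (InnerProductSpace.toDual ℝ _).symm (fderiv ℝ f x) from rfl,
      InnerProductSpace.toDual_symm_apply]
  rw [ge_iff_le, ← e1, ← e0, ← eu, ← eb]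
  exact main
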